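/- For every integer k ≥ 2 there exist a constant C > 0 and a natural number N such that for all n ≥ N and every connected simple graph G with exactly k edges, f(n, G) ≤ (2^n / (2(k−1))) · (1 + C/√n); that is, 𝒫(n) can be partitioned into at most (2^n / (2(k−1))) · (1 + C/√n) parts each of which is G-free. -/

import Mathlib

/-- A family `F` of subsets of `[n]` contains a Berge-`G` if there exist an injective
map `φ` from the vertices of `G` to `[n]` and an injective map `g` from the edges of `G`
to members of `F` such that for every edge `uv` of `G`, `{φ u, φ v} ⊆ g (uv)`. -/
def ContainsBergeOf {V : Type} (G : SimpleGraph V) {n : ℕ}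
    (F : Set (Finset (Fin n))) : Prop :=
  ∃ (φ : V → Fin n) (g : G.edgeSet → Finset (Fin n)),
    Function.Injective φ ∧ Function.Injective g ∧
    (∀ e : G.edgeSet, g e ∈ F) ∧
    (∀ (e : G.edgeSet) (v : V), v ∈ (e : Sym2 V) → φ v ∈ g e)

/-- A family of subsets of `[n]` is `G`-free if it contains no Berge-`G`. -/
def GFree {V : Type} (G : SimpleGraph V) {n : ℕ} (F : Set (Finset (Fin n))) : Prop :=
  ¬ ContainsBergeOf G F

lemma gfree_split {V : Type} [Fintype V] (G : SimpleGraph V) (hconn : G.Connected)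
    {k n : ℕ} (hk : 2 ≤ k) (hcard : G.edgeSet.ncard = k)
    (F C D : Set (Finset (Fin n))) (hF : F ⊆ C ∪ D)
    (hCfin : C.Finite) (hDfin : D.Finite)
    (hC : C.ncard ≤ k - 1) (hD : D.ncard ≤ k - 1)
    (hdis : ∀ S ∈ C, ∀ T ∈ D, Disjoint S T) : GFree G F := by
  rintro ⟨φ, g, -, hg, hgF, hmem⟩
  classical
  have hCD : ∀ e : G.edgeSet, g e ∈ C ∪ D := fun e => hF (hgF e)
  have hcardE : Nat.card G.edgeSet = k := hcard
  -- not all hosts in C, not all in D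
  have hnotall : ∀ (E : Set (Finset (Fin n))), E.Finite → E.ncard ≤ k - 1 →
      ¬ (∀ e : G.edgeSet, g e ∈ E) := by
    intro E hEfin hE hall
    have hsub : Set.range g ⊆ E := by rintro _ ⟨e, rfl⟩; exact hall e
    have : (Set.range g).ncard = k := by
      rw [← Nat.card_coe_set_eq, Nat.card_range_of_injective hg, hcardE]
    have := Set.ncard_le_ncard hsub hEfin
    omega
  push_neg at hnotall
  obtain ⟨e₁, he₁⟩ := hnotall D hDfin hD
  obtain ⟨e₂, he₂⟩ := hnotall C hCfin hC
  have he₁C : g e₁ ∈ C := (hCD e₁).resolve_right he₁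
  have he₂D : g e₂ ∈ D := (hCD e₂).resolve_left he₂
  -- contradiction at a common vertex
  have done : ∀ (u : V), (∃ e : G.edgeSet, u ∈ (e : Sym2 V) ∧ g e ∈ C) →
      (∃ e : G.edgeSet, u ∈ (e : Sym2 V) ∧ g e ∈ D) → False := by
    rintro u ⟨f₁, hu₁, hf₁⟩ ⟨f₂, hu₂, hf₂⟩
    exact Finset.disjoint_left.1 (hdis _ hf₁ _ hf₂) (hmem f₁ u hu₁) (hmem f₂ u hu₂)
  have key : ∀ (u u' : V) (w : G.Walk u u'),
      (∃ e : G.edgeSet, u ∈ (e : Sym2 V) ∧ g e ∈ C) →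
      (∃ e : G.edgeSet, u' ∈ (e : Sym2 V) ∧ g e ∈ D) → False := by
    intro u u' w
    induction w with
    | nil => exact fun h1 h2 => done _ h1 h2
    | @cons a b c hab p ih =>
      rintro ⟨e, hue, heC⟩ h2
      set f : G.edgeSet := ⟨s(a, b), hab⟩ with hf
      by_cases hfC : g f ∈ C
      · exact ih ⟨f, Sym2.mem_mk_right a b, hfC⟩ h2
      · exact done a ⟨e, hue, heC⟩ ⟨f, Sym2.mem_mk_left a b, (hCD f).resolve_left hfC⟩
  obtain ⟨u₁, hu₁⟩ : ∃ u, u ∈ (e₁ : Sym2 V) := ⟨(Quot.out (e₁ : Sym2 V)).1, Sym2.out_fst_mem _⟩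
  obtain ⟨u₂, hu₂⟩ : ∃ u, u ∈ (e₂ : Sym2 V) := ⟨(Quot.out (e₂ : Sym2 V)).1, Sym2.out_fst_mem _⟩
  obtain ⟨w⟩ := hconn.preconnected u₁ u₂
  exact key u₁ u₂ w ⟨e₁, hu₁, he₁C⟩ ⟨e₂, hu₂, he₂D⟩

open List

variable {m : ℕ}

def emb (m : ℕ) : Fin m ↪ Fin (m + 1) := ⟨Fin.castSucc, Fin.castSucc_injective m⟩

def iotaF (m : ℕ) (A : Finset (Fin m)) : Finset (Fin (m + 1)) := A.map (emb m)

def insF (m : ℕ) (A : Finset (Fin m)) : Finset (Fin (m + 1)) :=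
  insert (Fin.last m) (iotaF m A)

lemma last_not_mem_iotaF (A : Finset (Fin m)) : Fin.last m ∉ iotaF m A := by
  simp only [iotaF, Finset.mem_map, emb]
  rintro ⟨x, -, hx⟩
  exact absurd hx (Fin.castSucc_lt_last x).ne

lemma iotaF_card (A : Finset (Fin m)) : (iotaF m A).card = A.card := Finset.card_map _

lemma insF_card (A : Finset (Fin m)) : (insF m A).card = A.card + 1 := by
  rw [insF, Finset.card_insert_of_notMem (last_not_mem_iotaF A), iotaF_card]

lemma iotaF_inj : Function.Injective (iotaF m) := fun _ _ h => Finset.map_injective _ h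

lemma insF_inj : Function.Injective (insF m) := by
  intro A B h
  apply iotaF_inj
  have := congrArg (Finset.erase · (Fin.last m)) h
  simpa [insF, Finset.erase_insert, last_not_mem_iotaF] using this

lemma iotaF_ne_insF (A B : Finset (Fin m)) : iotaF m A ≠ insF m B := by
  intro h
  have : Fin.last m ∈ iotaF m A := h ▸ Finset.mem_insert_self _ _
  exact last_not_mem_iotaF A this

lemma iotaF_mono {A B : Finset (Fin m)} (h : A ⊆ B) : iotaF m A ⊆ iotaF m B :=
  Finset.map_subset_map.2 h

lemma insF_mono {A B : Finset (Fin m)} (h : A ⊆ B) : insF m A ⊆ insF m B :=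
  Finset.insert_subset_insert _ (iotaF_mono h)

lemma iotaF_surj (A' : Finset (Fin (m + 1))) (hy : Fin.last m ∉ A') :
    ∃ A, iotaF m A = A' := by
  classical
  refine ⟨A'.attach.image (fun x => Fin.castPred x.1 (fun h => hy (h ▸ x.2))), ?_⟩
  ext z
  simp only [iotaF, Finset.mem_map, Finset.mem_image, Finset.mem_attach, true_and,
    Subtype.exists, emb, Function.Embedding.coeFn_mk]
  constructor
  · rintro ⟨x, ⟨a, ha, rfl⟩, rfl⟩
    simpa [Fin.castSucc_castPred] using ha
  · intro hz
    have hzne : z ≠ Fin.last m := fun h => hy (h ▸ hz)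
    exact ⟨z.castPred hzne, ⟨z, hz, rfl⟩, Fin.castSucc_castPred _ _⟩

/-- invariant for a chain in the SCD of `P(Fin m)` -/
def GoodChain (m : ℕ) (c : List (Finset (Fin m))) : Prop :=
  c ≠ [] ∧ List.IsChain (· ⊆ ·) c ∧
    ∃ h0, 2 * h0 + c.length = m + 1 ∧
      ∀ (i : ℕ) (hi : i < c.length), (c.get ⟨i, hi⟩).card = h0 + i

lemma flatten_flatMap_eq {α β : Type*} (l : List α) (f : α → List (List β)) :
    (l.flatMap f).flatten = l.flatMap (fun a => (f a).flatten) := by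
  induction l <;> simp [*]

lemma flatMap_flatten_eq {α β : Type*} (l : List (List α)) (f : α → List β) :
    l.flatten.flatMap f = l.flatMap (fun c => c.flatMap f) := by
  induction l <;> simp [*]

lemma perm_flatMap_congr {α β : Type*} (l : List α) (f g : α → List β)
    (h : ∀ c ∈ l, (f c).Perm (g c)) : (l.flatMap f).Perm (l.flatMap g) := by
  induction l with
  | nil => simp
  | cons a t ih =>
    simp only [flatMap_cons]
    exact (h a mem_cons_self).append (ih fun c hc => h c (mem_cons_of_mem a hc))

lemma perm_map_map_flatMap (c : List (Finset (Fin m))) :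
    (c.map (iotaF m) ++ c.map (insF m)).Perm
      (c.flatMap (fun A => [iotaF m A, insF m A])) := by
  induction c with
  | nil => simp
  | cons A t ih =>
    simp only [map_cons, flatMap_cons, cons_append]
    refine Perm.cons _ (Perm.trans perm_middle (Perm.cons _ ih))

theorem exists_scd (m : ℕ) :
    ∃ chains : List (List (Finset (Fin m))),
      (∀ c ∈ chains, GoodChain m c) ∧
      chains.flatten.Nodup ∧
      (∀ A : Finset (Fin m), ∃ c ∈ chains, A ∈ c) := by
  induction m with
  | zero =>
    refine ⟨[[(∅ : Finset (Fin 0))]], ?_, by simp, ?_⟩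
    · rintro c hc
      simp only [mem_singleton] at hc
      subst hc
      exact ⟨by simp, by simp, 0, by simp, by simp⟩
    · intro A
      refine ⟨[∅], by simp, ?_⟩
      have : A = ∅ := Finset.eq_empty_of_forall_notMem (fun x _ => x.elim0)
      simp [this]
  | succ m ih =>
    obtain ⟨chains, hgood, hnodup, hcover⟩ := ih
    classical
    set f1 : List (Finset (Fin m)) → List (Finset (Fin (m+1))) :=
      fun c => c.map (iotaF m) ++ (c.getLast?.map (insF m)).toList with hf1
    set f2 : List (Finset (Fin m)) → List (Finset (Fin (m+1))) :=
      fun c => c.dropLast.map (insF m) with hf2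
    have hf1eq : ∀ (c : List (Finset (Fin m))) (hc : c ≠ []),
        f1 c = c.map (iotaF m) ++ [insF m (c.getLast hc)] := by
      intro c hc
      rw [hf1]
      simp [List.getLast?_eq_getLast hc]
    refine ⟨chains.flatMap (fun c => if c.dropLast = [] then [f1 c] else [f1 c, f2 c]),
      ?_, ?_, ?_⟩
    · -- goodness
      intro b hb
      rw [mem_flatMap] at hb
      obtain ⟨c, hc, hbc⟩ := hb
      obtain ⟨hcne, hchain, h0, hlen, hcards⟩ := hgood c hc
      have hL : 1 ≤ c.length := length_pos_iff.2 hcne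
      have hb12 : b = f1 c ∨ (c.dropLast ≠ [] ∧ b = f2 c) := by
        by_cases hd : c.dropLast = [] <;> simp [hd] at hbc <;> tauto
      rcases hb12 with rfl | ⟨hd, rfl⟩
      · rw [hf1eq c hcne]
        refine ⟨by simp, ?_, h0, ?_, ?_⟩
        · rw [isChain_append]
          refine ⟨(isChain_map _).2 (hchain.imp ?_), isChain_singleton _, ?_⟩
          · intro a b hab
            exact iotaF_mono hab
          · intro x hx z hz
            simp only [head?_cons, Option.mem_def, Option.some.injEq] at hz
            rw [getLast?_map, List.getLast?_eq_getLast hcne] at hx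
            simp only [Option.mem_def, Option.map_some,
              Option.some.injEq] at hx
            subst hz
            rw [← hx]
            exact Finset.subset_insert _ _
        · simp only [length_append, length_map, length_singleton]
          omega
        · intro i hi
          simp only [length_append, length_map, length_singleton] at hi
          by_cases hiL : i < c.length
          · have : (c.map (iotaF m) ++ [insF m (c.getLast hcne)]).get ⟨i, by simp; omega⟩
                = iotaF m (c.get ⟨i, hiL⟩) := by
              rw [List.get_eq_getElem, List.getElem_append_left (by simpa using hiL)]
              simp
            rw [List.get_eq_getElem] at this ⊢
            rw [this, iotaF_card]
            exact hcards i hiL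
          · have hiL' : i = c.length := by omega
            subst hiL'
            have : (c.map (iotaF m) ++ [insF m (c.getLast hcne)]).get ⟨c.length, by simp⟩
                = insF m (c.getLast hcne) := by
              rw [List.get_eq_getElem, List.getElem_append_right (by simp)]
              simp
            rw [List.get_eq_getElem] at this ⊢
            rw [this, insF_card, List.getLast_eq_getElem]
            have := hcards (c.length - 1) (by omega)
            rw [List.get_eq_getElem] at this
            rw [this]
            omega
      · have hdl : c.dropLast.length = c.length - 1 := by simp
        have hL2 : 2 ≤ c.length := by
          have := congrArg List.length (List.dropLast_append_getLast hcne)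
          simp only [length_append, length_singleton, length_dropLast] at this
          have hdl1 : 1 ≤ c.dropLast.length := length_pos_iff.2 hd
          omega
        refine ⟨by simp only [hf2]; exact fun h => hd (map_eq_nil_iff.mp h), ?_, h0 + 1, ?_, ?_⟩
        · refine (isChain_map _).2 ?_
          have : IsChain (· ⊆ ·) (c.dropLast ++ [c.getLast hcne]) := by
            rw [List.dropLast_append_getLast]; exact hchain
          exact (this.left_of_append).imp (fun a b hab => insF_mono hab)
        · simp only [hf2, length_map, hdl]; omega
        · intro i hi
          simp only [hf2, length_map, hdl] at hi
          have : (c.dropLast.map (insF m)).get ⟨i, by simp [hdl]; omega⟩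
              = insF m (c.get ⟨i, by omega⟩) := by
            rw [List.get_eq_getElem, List.getElem_map]
            congr 1
            rw [List.getElem_dropLast]
            rfl
          rw [List.get_eq_getElem] at this ⊢
          rw [this, insF_card, hcards i (by omega)]
          omega
    · -- nodup
      have hstep : (chains.flatMap
            (fun c => if c.dropLast = [] then [f1 c] else [f1 c, f2 c])).flatten.Perm
          (chains.flatten.flatMap (fun A => [iotaF m A, insF m A])) := by
        have e1 : (chains.flatMap
              (fun c => if c.dropLast = [] then [f1 c] else [f1 c, f2 c])).flatten
            = chains.flatMap
              (fun c => (if c.dropLast = [] then [f1 c] else [f1 c, f2 c]).flatten) := by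
          exact flatten_flatMap_eq _ _
        have e2 : chains.flatten.flatMap (fun A => [iotaF m A, insF m A])
            = chains.flatMap (fun c => c.flatMap (fun A => [iotaF m A, insF m A])) := by
          exact flatMap_flatten_eq _ _
        rw [e1, e2]
        apply perm_flatMap_congr
        intro c hc
        obtain ⟨hcne, -, -⟩ := hgood c hc
        have hsplit : (if c.dropLast = [] then [f1 c] else [f1 c, f2 c]).flatten.Perm
            (f1 c ++ f2 c) := by
          by_cases hd : c.dropLast = []
          · rw [if_pos hd]
            simp only [hf2, hd, map_nil, flatten_cons, flatten_nil, append_nil]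
            exact Perm.refl _
          · rw [if_neg hd]
            simp only [flatten_cons, flatten_nil, append_nil]
            exact Perm.refl _
        refine hsplit.trans ?_
        have htail : [insF m (c.getLast hcne)] ++ c.dropLast.map (insF m)
            ~ c.map (insF m) := by
          have h1 : [insF m (c.getLast hcne)] ++ c.dropLast.map (insF m)
              ~ c.dropLast.map (insF m) ++ [insF m (c.getLast hcne)] := perm_append_comm
          have h2 : c.dropLast.map (insF m) ++ [insF m (c.getLast hcne)]
              = c.map (insF m) := by
            have : c.dropLast.map (insF m) ++ [insF m (c.getLast hcne)]
                = (c.dropLast ++ [c.getLast hcne]).map (insF m) := by simp [map_append]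
            rw [this, List.dropLast_append_getLast]
          exact h2 ▸ h1
        have : (f1 c ++ f2 c).Perm (c.map (iotaF m) ++ c.map (insF m)) := by
          rw [hf1eq c hcne, hf2, append_assoc]
          exact Perm.append_left _ htail
        exact this.trans (perm_map_map_flatMap c)
      refine (hstep.symm).nodup ?_
      rw [nodup_flatMap]
      constructor
      · intro A _
        simp [iotaF_ne_insF]
      · refine hnodup.imp ?_
        intro A B hAB
        intro x hx hy
        simp only [Function.onFun, mem_cons, mem_singleton, not_mem_nil, or_false] at hx hy
        rcases hx with rfl | rfl <;> rcases hy with h | h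
        · exact hAB (iotaF_inj h)
        · exact iotaF_ne_insF _ _ h
        · exact iotaF_ne_insF _ _ h.symm
        · exact hAB (insF_inj h)
    · -- coverage
      intro A'
      by_cases hy : Fin.last m ∈ A'
      · obtain ⟨B, hB⟩ := iotaF_surj (A'.erase (Fin.last m)) (Finset.notMem_erase _ _)
        have hA' : A' = insF m B := by
          rw [insF, hB, Finset.insert_erase hy]
        obtain ⟨c, hc, hBc⟩ := hcover B
        obtain ⟨hcne, -, -⟩ := hgood c hc
        by_cases hlast : B = c.getLast hcne
        · refine ⟨f1 c, ?_, ?_⟩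
          · rw [mem_flatMap]
            exact ⟨c, hc, by by_cases hd : c.dropLast = [] <;> simp [hd]⟩
          · rw [hf1eq c hcne, hA', hlast]
            simp
        · have hBc' : B ∈ c.dropLast := by
            have := List.dropLast_append_getLast hcne
            rw [← this, mem_append] at hBc
            rcases hBc with h | h
            · exact h
            · simp only [mem_singleton] at h; exact absurd h hlast
          have hd : c.dropLast ≠ [] := ne_nil_of_mem hBc'
          refine ⟨f2 c, ?_, ?_⟩
          · rw [mem_flatMap]
            exact ⟨c, hc, by simp [hd]⟩
          · rw [hf2, hA']
            exact mem_map_of_mem hBc'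
      · obtain ⟨A, hA⟩ := iotaF_surj A' hy
        obtain ⟨c, hc, hAc⟩ := hcover A
        refine ⟨f1 c, ?_, ?_⟩
        · rw [mem_flatMap]
          exact ⟨c, hc, by by_cases hd : c.dropLast = [] <;> simp [hd]⟩
        · rw [hf1]
          simp only [mem_append]
          exact Or.inl (hA ▸ mem_map_of_mem hAc)

/-! ### blocks -/

def seg {α : Type*} (l : List α) (a len : ℕ) : List α :=
  (List.range len).filterMap (fun t => l[a + t]?)

lemma mem_seg {α : Type*} {l : List α} {a len : ℕ} {A : α} :
    A ∈ seg l a len ↔ ∃ t < len, l[a + t]? = some A := by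
  simp [seg, List.mem_filterMap]

lemma length_seg {α : Type*} (l : List α) (a len : ℕ) : (seg l a len).length ≤ len := by
  have := List.length_filterMap_le (fun t => l[a + t]?) (List.range len)
  simpa [seg] using this

lemma disj_iota_pAr {A B : Finset (Fin m)} (h : A ⊆ B) :
    Disjoint (iotaF m A) (insF m Bᶜ) := by
  rw [Finset.disjoint_left]
  intro x hx hx'
  rw [insF, Finset.mem_insert] at hx'
  rcases hx' with rfl | hx'
  · exact last_not_mem_iotaF A hx
  · simp only [iotaF, Finset.mem_map, emb, Function.Embedding.coeFn_mk] at hx hx'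
    obtain ⟨a, ha, rfl⟩ := hx
    obtain ⟨b, hb, hab⟩ := hx'
    cases Fin.castSucc_injective m hab
    exact (Finset.mem_compl.1 hb) (h ha)

lemma countAux {β : Type*} [DecidableEq β] :
    ∀ (L : List (List β)) (s : Finset β), L.Pairwise List.Disjoint →
      (∀ c ∈ L, ∃ A ∈ c, A ∈ s) → L.length ≤ s.card := by
  intro L
  induction L with
  | nil => intro s _ _; simp
  | cons c t ih =>
    intro s hpw hex
    obtain ⟨A, hAc, hAs⟩ := hex c (List.mem_cons_self)
    have ht : ∀ d ∈ t, ∃ B ∈ d, B ∈ s.erase A := by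
      intro d hd
      obtain ⟨B, hBd, hBs⟩ := hex d (List.mem_cons_of_mem _ hd)
      refine ⟨B, hBd, Finset.mem_erase.2 ⟨?_, hBs⟩⟩
      intro hBA
      exact (List.pairwise_cons.1 hpw).1 d hd hAc (hBA ▸ hBd)
      -- List.Disjoint c d : ∀ a ∈ c, a ∉ d
    have := ih (s.erase A) (List.pairwise_cons.1 hpw).2 ht
    have hAcard := Finset.card_erase_add_one hAs
    simp only [List.length_cons]
    omega

lemma sum_map_add_const {α : Type*} (l : List α) (f : α → ℕ) (k : ℕ) :
    (l.map (fun x => f x + k)).sum = (l.map f).sum + l.length * k := by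
  induction l with
  | nil => simp
  | cons a t ih => simp [ih]; ring

lemma sum_div_le (l : List ℕ) (r : ℕ) : (l.map (· / r)).sum ≤ l.sum / r := by
  rcases Nat.eq_zero_or_pos r with rfl | hr
  · simp
  induction l with
  | nil => simp
  | cons a t ih =>
    simp only [List.map_cons, List.sum_cons]
    have : (a / r + (t.map (· / r)).sum) ≤ a / r + t.sum / r := by omega
    refine le_trans this ?_
    rw [Nat.le_div_iff_mul_le hr, add_mul]
    exact Nat.add_le_add (Nat.div_mul_le_self a r) (Nat.div_mul_le_self t.sum r)

theorem exists_blocks (r m : ℕ) (hr : 1 ≤ r) :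
    ∃ blocks : List (List (Finset (Fin (m+1))) × List (Finset (Fin (m+1)))),
      (∀ b ∈ blocks, b.1.length ≤ r ∧ b.2.length ≤ r ∧
        ∀ S ∈ b.1, ∀ T ∈ b.2, Disjoint S T) ∧
      (∀ A : Finset (Fin (m+1)), ∃ b ∈ blocks, A ∈ b.1 ∨ A ∈ b.2) ∧
      (blocks.length ≤ 2 ^ m / r + r * (m.choose (m/2))) := by
  classical
  obtain ⟨chains, hgood, hnodup, hcover⟩ := exists_scd m
  set pAr : Finset (Fin m) → Finset (Fin (m+1)) := fun S => insF m Sᶜ with hpAr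
  set mkB : List (Finset (Fin m)) → List (List (Finset (Fin (m+1))) × List (Finset (Fin (m+1)))) :=
    fun l => (List.range ((l.length + r - 1) / r)).map (fun s =>
        ((seg l (s*r) r).map (iotaF m), (seg l (s*r + (r-1)) r).map pAr))
      ++ (seg l 0 (r-1)).map (fun S => ([pAr S], [])) with hmkB
  refine ⟨chains.flatMap mkB, ?_, ?_, ?_⟩
  · -- goodness of blocks
    intro b hb
    rw [mem_flatMap] at hb
    obtain ⟨l, hl, hbl⟩ := hb
    have hpw : List.Pairwise (· ⊆ ·) l := by
      obtain ⟨-, hchain, -⟩ := hgood l hl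
      exact isChain_iff_pairwise.mp hchain
    have hsub : ∀ (i j : ℕ) (hi : i < l.length) (hj : j < l.length), i ≤ j →
        l.get ⟨i, hi⟩ ⊆ l.get ⟨j, hj⟩ := by
      intro i j hi hj hij
      rcases Nat.lt_or_ge i j with h | h
      · exact (List.pairwise_iff_getElem.1 hpw) i j hi hj h
      · have : i = j := by omega
        subst this; rfl
    rw [hmkB, mem_append] at hbl
    rcases hbl with hbl | hbl
    · rw [mem_map] at hbl
      obtain ⟨s, -, rfl⟩ := hbl
      refine ⟨by simpa using length_seg l (s*r) r, by simpa using length_seg l (s*r+(r-1)) r, ?_⟩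
      intro S hS T hT
      simp only [mem_map] at hS hT
      obtain ⟨A, hA, rfl⟩ := hS
      obtain ⟨B, hB, rfl⟩ := hT
      rw [mem_seg] at hA hB
      obtain ⟨t, ht, hAeq⟩ := hA
      obtain ⟨u, hu, hBeq⟩ := hB
      rw [List.getElem?_eq_some_iff] at hAeq hBeq
      obtain ⟨hti, hAeq⟩ := hAeq
      obtain ⟨huj, hBeq⟩ := hBeq
      have hij : s*r + t ≤ s*r + (r-1) + u := by omega
      have := hsub (s*r + t) (s*r + (r-1) + u) hti huj hij
      rw [List.get_eq_getElem, List.get_eq_getElem, hAeq, hBeq] at this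
      exact disj_iota_pAr this
    · rw [mem_map] at hbl
      obtain ⟨S, -, rfl⟩ := hbl
      exact ⟨by simpa using hr, by simp, by simp⟩
  · -- coverage
    intro A'
    by_cases hy : Fin.last m ∈ A'
    · obtain ⟨B, hB⟩ := iotaF_surj (A'.erase (Fin.last m)) (Finset.notMem_erase _ _)
      have hA' : A' = pAr Bᶜ := by
        rw [hpAr]
        simp only [compl_compl]
        rw [insF, hB, Finset.insert_erase hy]
      obtain ⟨l, hl, hBl⟩ := hcover Bᶜ
      obtain ⟨j, hj, hjeq⟩ := List.mem_iff_getElem.1 hBl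
      rcases Nat.lt_or_ge j (r-1) with hjr | hjr
      · -- leftover singleton block
        refine ⟨([pAr Bᶜ], []), ?_, by simp [hA']⟩
        rw [mem_flatMap]
        refine ⟨l, hl, ?_⟩
        rw [hmkB, mem_append]
        right
        rw [mem_map]
        refine ⟨Bᶜ, ?_, rfl⟩
        rw [mem_seg]
        exact ⟨j, hjr, by rw [List.getElem?_eq_some_iff]; exact ⟨by simpa using hj, by simpa using hjeq⟩⟩
      · -- partner side of a regular block
        obtain ⟨s, t, htr, hmod⟩ : ∃ s t, t < r ∧ s * r + t = j - (r-1) :=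
          ⟨(j - (r-1)) / r, (j - (r-1)) % r, Nat.mod_lt _ (by omega), Nat.div_add_mod' _ _⟩
        have hjeq2 : s*r + (r-1) + t = j := by omega
        have hsK : s < (l.length + r - 1) / r := by
          have h1 : (s+1) * r ≤ l.length + r - 1 := by
            rw [add_mul, one_mul]
            omega
          have h2 := (Nat.le_div_iff_mul_le (by omega : 0 < r)).2 h1
          omega
        refine ⟨((seg l (s*r) r).map (iotaF m), (seg l (s*r+(r-1)) r).map pAr), ?_, ?_⟩
        · rw [mem_flatMap]
          refine ⟨l, hl, ?_⟩
          rw [hmkB, mem_append]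
          exact Or.inl (mem_map.2 ⟨s, mem_range.2 hsK, rfl⟩)
        · right
          simp only [mem_map]
          refine ⟨Bᶜ, ?_, hA'.symm⟩
          rw [mem_seg]
          refine ⟨t, htr, ?_⟩
          have hq : l[s*r + (r-1) + t]? = l[j]? := by rw [hjeq2]
          rw [hq, List.getElem?_eq_some_iff]
          exact ⟨hj, hjeq⟩
    · obtain ⟨A, hA⟩ := iotaF_surj A' hy
      obtain ⟨l, hl, hAl⟩ := hcover A
      obtain ⟨i, hi, hieq⟩ := List.mem_iff_getElem.1 hAl
      obtain ⟨s, t, htr, hmod⟩ : ∃ s t, t < r ∧ s * r + t = i :=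
        ⟨i / r, i % r, Nat.mod_lt _ (by omega), Nat.div_add_mod' _ _⟩
      have hsK : s < (l.length + r - 1) / r := by
        have h1 : (s+1) * r ≤ l.length + r - 1 := by
          rw [add_mul, one_mul]
          omega
        have h2 := (Nat.le_div_iff_mul_le (by omega : 0 < r)).2 h1
        omega
      refine ⟨((seg l (s*r) r).map (iotaF m), (seg l (s*r+(r-1)) r).map pAr), ?_, ?_⟩
      · rw [mem_flatMap]
        refine ⟨l, hl, ?_⟩
        rw [hmkB, mem_append]
        exact Or.inl (mem_map.2 ⟨s, mem_range.2 hsK, rfl⟩)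
      · left
        simp only [mem_map]
        refine ⟨A, ?_, hA⟩
        rw [mem_seg]
        refine ⟨t, htr, ?_⟩
        have hq : l[s*r + t]? = l[i]? := by rw [show s*r + t = i by omega]
        rw [hq, List.getElem?_eq_some_iff]
        exact ⟨hi, hieq⟩
  · -- count
    rw [List.length_flatMap]
    have hper : ∀ l ∈ chains, (List.length ∘ mkB) l ≤ l.length / r + r := by
      intro l hl
      simp only [Function.comp, hmkB, length_append, length_map, length_range]
      have h1 : (l.length + r - 1) / r ≤ l.length / r + 1 := by
        have : l.length + r - 1 ≤ l.length + r := by omega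
        have h2 := Nat.div_le_div_right (c := r) this
        rw [Nat.add_div_right _ (by omega)] at h2
        exact h2
      have h3 := length_seg l 0 (r-1)
      omega
    have hsum : (chains.map (List.length ∘ mkB)).sum ≤
        (chains.map (fun l => l.length / r + r)).sum := by
      apply List.sum_le_sum
      intro l hl
      exact hper l hl
    refine le_trans hsum ?_
    rw [sum_map_add_const chains (fun l => l.length / r) r]
    have hdiv : (chains.map (fun l => l.length / r)).sum ≤ 2^m / r := by
      have h1 : (chains.map (fun l => l.length / r)).sum
          = ((chains.map List.length).map (· / r)).sum := by
        rw [List.map_map]; rfl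
      rw [h1]
      refine le_trans (sum_div_le _ r) ?_
      apply Nat.div_le_div_right
      have : (chains.map List.length).sum = chains.flatten.length := by
        rw [List.length_flatten]
      rw [this]
      have := hnodup.length_le_card
      simpa [Fintype.card_finset] using this
    have hcc : chains.length ≤ m.choose (m/2) := by
      have hpwd : chains.Pairwise List.Disjoint := (List.nodup_flatten.1 hnodup).2
      have hmid : ∀ l ∈ chains, ∃ A ∈ l, A ∈ Finset.powersetCard (m/2) (Finset.univ : Finset (Fin m)) := by
        intro l hl
        obtain ⟨hne, -, h0, hlen, hcards⟩ := hgood l hl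
        have hL : 1 ≤ l.length := length_pos_iff.2 hne
        have hh0 : h0 ≤ m/2 := by omega
        have hi : m/2 - h0 < l.length := by omega
        refine ⟨l.get ⟨m/2 - h0, hi⟩, List.get_mem _ _, ?_⟩
        rw [Finset.mem_powersetCard]
        refine ⟨Finset.subset_univ _, ?_⟩
        rw [hcards _ hi]
        omega
      have := countAux chains _ hpwd hmid
      simpa [Finset.card_powersetCard] using this
    calc (chains.map (fun l => l.length / r)).sum + chains.length * r
        ≤ 2^m / r + (m.choose (m/2)) * r := by
          exact Nat.add_le_add hdiv (Nat.mul_le_mul_right r hcc)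
      _ = 2^m / r + r * (m.choose (m/2)) := by ring

lemma cb_sq_bound : ∀ q : ℕ, (Nat.centralBinom q)^2 * (3*q+1) ≤ 16^q := by
  intro q
  induction q with
  | zero => simp [Nat.centralBinom]
  | succ q ih =>
    have key := Nat.succ_mul_centralBinom_succ q
    have hpos : 0 < (q+1)^2 * (3*q+1) := by positivity
    refine Nat.le_of_mul_le_mul_left ?_ hpos
    have e1 : (q+1)^2 * (3*q+1) * ((Nat.centralBinom (q+1))^2 * (3*(q+1)+1))
        = ((q+1) * Nat.centralBinom (q+1))^2 * ((3*q+1) * (3*q+4)) := by ring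
    rw [e1, key]
    have e2 : (2*(2*q+1) * Nat.centralBinom q)^2 * ((3*q+1)*(3*q+4))
        = ((Nat.centralBinom q)^2 * (3*q+1)) * (4*(2*q+1)^2*(3*q+4)) := by ring
    rw [e2]
    have e3 : 4*(2*q+1)^2*(3*q+4) ≤ 16 * ((q+1)^2 * (3*q+1)) := by nlinarith
    calc (Nat.centralBinom q)^2 * (3*q+1) * (4*(2*q+1)^2*(3*q+4))
        ≤ 16^q * (16 * ((q+1)^2 * (3*q+1))) := Nat.mul_le_mul ih e3
      _ = (q+1)^2 * (3*q+1) * 16^(q+1) := by ring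

lemma midbound (m : ℕ) : (m.choose (m/2))^2 * m ≤ 4^m := by
  rcases Nat.even_or_odd m with ⟨q, hq⟩ | ⟨q, hq⟩
  · subst hq
    have h2q : (q + q) = 2*q := by ring
    rw [h2q]
    have hdiv : (2*q)/2 = q := by omega
    rw [hdiv]
    have := cb_sq_bound q
    have h16 : (16:ℕ)^q = 4^(2*q) := by
      rw [show (16:ℕ) = 4^2 by norm_num, ← pow_mul]
    have hcb : (2*q).choose q = Nat.centralBinom q := rfl
    rw [hcb]
    calc (Nat.centralBinom q)^2 * (2*q) ≤ (Nat.centralBinom q)^2 * (3*q+1) :=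
          Nat.mul_le_mul_left _ (by omega)
      _ ≤ 16^q := this
      _ = 4^(2*q) := h16
  · subst hq
    have hdiv : (2*q+1)/2 = q := by omega
    rw [hdiv]
    rcases Nat.eq_zero_or_pos q with rfl | hq1
    · simp
    · obtain ⟨p, rfl⟩ : ∃ p, q = p + 1 := ⟨q - 1, by omega⟩
      have hpas : (2*(p+1)+1).choose (p+1) = (2*p+2).choose p + (2*p+2).choose (p+1) := by
        have : 2*(p+1)+1 = (2*p+2) + 1 := by ring
        rw [this, Nat.choose_succ_succ]
      have hle1 : (2*p+2).choose p ≤ (2*p+2).choose (p+1) := by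
        have := Nat.choose_le_middle p (2*p+2)
        simpa [show (2*p+2)/2 = p+1 by omega] using this
      have hcb : (2*p+2).choose (p+1) = Nat.centralBinom (p+1) := by
        have : 2*p+2 = 2*(p+1) := by ring
        rw [this]; rfl
      have hle : (2*(p+1)+1).choose (p+1) ≤ 2 * Nat.centralBinom (p+1) := by
        rw [hpas, hcb]
        rw [hcb] at hle1
        omega
      have hsq : ((2*(p+1)+1).choose (p+1))^2 * (2*(p+1)+1)
          ≤ 4 * ((Nat.centralBinom (p+1))^2 * (3*(p+1)+1)) := by
        have h1 : ((2*(p+1)+1).choose (p+1))^2 ≤ (2 * Nat.centralBinom (p+1))^2 :=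
          Nat.pow_le_pow_left hle 2
        calc ((2*(p+1)+1).choose (p+1))^2 * (2*(p+1)+1)
            ≤ (2 * Nat.centralBinom (p+1))^2 * (2*(p+1)+1) := Nat.mul_le_mul_right _ h1
          _ = 4 * ((Nat.centralBinom (p+1))^2 * (2*(p+1)+1)) := by ring
          _ ≤ 4 * ((Nat.centralBinom (p+1))^2 * (3*(p+1)+1)) := by
              exact Nat.mul_le_mul_left _ (Nat.mul_le_mul_left _ (by omega))
      refine le_trans hsq ?_
      have := cb_sq_bound (p+1)
      calc 4 * ((Nat.centralBinom (p+1))^2 * (3*(p+1)+1)) ≤ 4 * 16^(p+1) :=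
            Nat.mul_le_mul_left _ this
        _ = 4^(2*(p+1)+1) := by
            have h4 : (4:ℕ)^(2*(p+1)+1) = 4 * (4^2)^(p+1) := by
              rw [pow_succ', ← pow_mul]
            rw [h4]
            norm_num

lemma mid_real (m : ℕ) (hm : 1 ≤ m) :
    (m.choose (m/2) : ℝ) ≤ 2^m / Real.sqrt m := by
  have hb : ((m.choose (m/2) : ℝ))^2 * m ≤ (2^m)^2 := by
    have := midbound m
    have hc : ((m.choose (m/2))^2 * m : ℝ) ≤ (4^m : ℕ) := by exact_mod_cast this
    calc ((m.choose (m/2) : ℝ))^2 * m ≤ ((4:ℝ))^m := by push_cast at hc ⊢; linarith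
      _ = (2^m)^2 := by rw [← pow_mul, show (4:ℝ) = 2^2 by norm_num, ← pow_mul]; ring_nf
  have hsm : 0 < Real.sqrt m := Real.sqrt_pos.2 (by exact_mod_cast Nat.lt_of_lt_of_le Nat.zero_lt_one hm)
  rw [le_div_iff₀ hsm]
  have hnn : 0 ≤ (m.choose (m/2) : ℝ) * Real.sqrt m := by positivity
  have hsq : ((m.choose (m/2) : ℝ) * Real.sqrt m)^2 ≤ (2^m)^2 := by
    rw [mul_pow, Real.sq_sqrt (by positivity : (0:ℝ) ≤ (m:ℝ))]
    exact hb
  nlinarith [hsq, hnn, pow_pos (show (0:ℝ) < 2 by norm_num) m]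

lemma list_getElem_eq_of_eq_idx {α : Type*} (l : List α) {i j : ℕ} (hij : i = j)
    (hi : i < l.length) : l[i]'hi = l[j]'(hij ▸ hi) := by subst hij; rfl

/-- For every fixed `k ≥ 2` there are a constant `C > 0` and a threshold `N` such that
for all `n ≥ N` and every connected simple graph `G` with exactly `k` edges, the power
set of `[n]` can be partitioned into at most `(2 ^ n / (2 (k - 1))) (1 + C / √n)`
`G`-free parts, i.e. `f(n, G) ≤ (2 ^ n / (2 (k - 1))) (1 + O(1 / √n))`. -/
theorem f_G_upper (k : ℕ) (hk : 2 ≤ k) :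
    ∃ C : ℝ, 0 < C ∧ ∃ N : ℕ, ∀ n : ℕ, N ≤ n →
      ∀ (V : Type) [Fintype V] (G : SimpleGraph V),
        G.Connected → G.edgeSet.ncard = k →
        ∃ (t : ℕ) (c : Finset (Fin n) → Fin t),
          (∀ i : Fin t, GFree G {A | c A = i}) ∧
          (t : ℝ) ≤ 2 ^ n / (2 * ((k : ℝ) - 1)) * (1 + C / Real.sqrt n) := by
  have hk2 : (2:ℝ) ≤ (k:ℝ) := by exact_mod_cast hk
  refine ⟨2 * (k:ℝ)^2, by nlinarith, 2, ?_⟩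
  intro n hn V _ G hconn hck
  classical
  obtain ⟨m, rfl⟩ : ∃ m, n = m + 1 := ⟨n - 1, by omega⟩
  have hm1 : 1 ≤ m := by omega
  set r := k - 1 with hrdef
  have hr : 1 ≤ r := by omega
  obtain ⟨blocks, hbgood, hbcover, hbcount⟩ := exists_blocks r m hr
  have hbne : ∀ A : Finset (Fin (m+1)),
      ∃ b ∈ blocks, (fun bb => decide (A ∈ bb.1 ∨ A ∈ bb.2)) b = true := by
    intro A
    obtain ⟨b, hb, hAb⟩ := hbcover A
    exact ⟨b, hb, by simpa using hAb⟩
  refine ⟨blocks.length, fun A => ⟨blocks.findIdx (fun bb => decide (A ∈ bb.1 ∨ A ∈ bb.2)),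
    List.findIdx_lt_length_of_exists (hbne A)⟩, ?_, ?_⟩
  · intro i
    have hi : (i : ℕ) < blocks.length := i.2
    obtain ⟨hb1, hb2, hbd⟩ := hbgood (blocks[(i:ℕ)]'hi) (List.getElem_mem hi)
    refine gfree_split G hconn hk hck _ {S | S ∈ (blocks[(i:ℕ)]'hi).1}
      {S | S ∈ (blocks[(i:ℕ)]'hi).2} ?_ ?_ ?_ ?_ ?_ ?_
    · intro A hA
      simp only [Set.mem_setOf_eq] at hA
      have hidx : blocks.findIdx (fun bb => decide (A ∈ bb.1 ∨ A ∈ bb.2)) = (i:ℕ) := by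
        have := congrArg Fin.val hA
        simpa using this
      have hw := List.findIdx_lt_length_of_exists (hbne A)
      have hp := List.findIdx_getElem (p := fun bb => decide (A ∈ bb.1 ∨ A ∈ bb.2))
        (xs := blocks) (w := hw)
      rw [list_getElem_eq_of_eq_idx blocks hidx hw] at hp
      have : A ∈ (blocks[(i:ℕ)]'hi).1 ∨ A ∈ (blocks[(i:ℕ)]'hi).2 := by
        simpa using hp
      exact this
    · exact (blocks[(i:ℕ)]'hi).1.finite_toSet
    · exact (blocks[(i:ℕ)]'hi).2.finite_toSet
    · have he : {S | S ∈ (blocks[(i:ℕ)]'hi).1} = ↑((blocks[(i:ℕ)]'hi).1.toFinset) := by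
        ext S; simp
      rw [he, Set.ncard_coe_finset]
      exact le_trans (List.toFinset_card_le _) hb1
    · have he : {S | S ∈ (blocks[(i:ℕ)]'hi).2} = ↑((blocks[(i:ℕ)]'hi).2.toFinset) := by
        ext S; simp
      rw [he, Set.ncard_coe_finset]
      exact le_trans (List.toFinset_card_le _) hb2
    · intro S hS T hT
      exact hbd S hS T hT
  · -- counting
    have hkr : ((k:ℝ) - 1) = (r : ℝ) := by
      rw [hrdef]
      push_cast [Nat.cast_sub (by omega : 1 ≤ k)]
      ring
    rw [hkr]
    have hrpos : (0:ℝ) < (r:ℝ) := by exact_mod_cast hr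
    have hsqmpos : (0:ℝ) < Real.sqrt m := Real.sqrt_pos.2 (by exact_mod_cast hm1)
    have hSQpos : (0:ℝ) < Real.sqrt ((m:ℕ)+1 : ℕ) := Real.sqrt_pos.2 (by positivity)
    set B : ℝ := (m.choose (m/2) : ℝ) with hBdef
    have hB : B ≤ 2^m / Real.sqrt m := mid_real m hm1
    have hBnn : (0:ℝ) ≤ B := by positivity
    have hc1 : (blocks.length : ℝ) ≤ ((2^m / r : ℕ) : ℝ) + (r:ℝ) * B := by
      have := Nat.cast_le (α := ℝ) |>.2 hbcount
      push_cast at this ⊢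
      convert this using 2
    have hc2 : ((2^m / r : ℕ) : ℝ) ≤ (2:ℝ)^m / (r:ℝ) := by
      have := Nat.cast_div_le (α := ℝ) (m := 2^m) (n := r)
      push_cast at this
      exact this
    have hsq2 : Real.sqrt ((m:ℕ)+1:ℕ) ≤ 2 * Real.sqrt m := by
      have hcast : (((m:ℕ)+1:ℕ) : ℝ) = (m:ℝ) + 1 := by push_cast; ring
      rw [hcast]
      have h1 : ((m:ℝ)+1) ≤ 4 * m := by
        have : (1:ℝ) ≤ m := by exact_mod_cast hm1
        linarith
      calc Real.sqrt ((m:ℝ)+1) ≤ Real.sqrt (4*m) := Real.sqrt_le_sqrt h1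
        _ = 2 * Real.sqrt m := by
            rw [show (4:ℝ)*m = 2^2 * m by ring, Real.sqrt_mul (by positivity),
              Real.sqrt_sq (by norm_num)]
    have hrk : (r:ℝ) ≤ (k:ℝ) := by exact_mod_cast (by omega : r ≤ k)
    have piece2 : (r:ℝ) * B ≤ ((2:ℝ)^m / r) * ((2*(k:ℝ)^2) / Real.sqrt ((m:ℕ)+1:ℕ)) := by
      rw [div_mul_div_comm, le_div_iff₀ (by positivity)]
      have step1 : (r:ℝ) * B * ((r:ℝ) * Real.sqrt ((m:ℕ)+1:ℕ))
          ≤ (r:ℝ) * (2^m / Real.sqrt m) * ((r:ℝ) * Real.sqrt ((m:ℕ)+1:ℕ)) := by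
        gcongr
      refine le_trans step1 ?_
      have e1 : (r:ℝ) * (2^m / Real.sqrt m) * ((r:ℝ) * Real.sqrt ((m:ℕ)+1:ℕ))
          = ((r:ℝ) * r * 2^m) * (Real.sqrt ((m:ℕ)+1:ℕ) / Real.sqrt m) := by
        ring
      rw [e1]
      have hfrac : Real.sqrt ((m:ℕ)+1:ℕ) / Real.sqrt m ≤ 2 := by
        rw [div_le_iff₀ hsqmpos]
        linarith
      have e2 : ((r:ℝ) * r * 2^m) * (Real.sqrt ((m:ℕ)+1:ℕ) / Real.sqrt m)
          ≤ ((r:ℝ) * r * 2^m) * 2 := by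
        apply mul_le_mul_of_nonneg_left hfrac (by positivity)
      refine le_trans e2 ?_
      have hrr : (r:ℝ) * r ≤ (k:ℝ) * k := by nlinarith
      nlinarith [pow_pos (show (0:ℝ) < 2 by norm_num) m]
    have hEq : (2:ℝ)^(m+1) / (2*(r:ℝ)) = (2:ℝ)^m / r := by
      rw [pow_succ]
      field_simp
    calc (blocks.length : ℝ) ≤ ((2^m / r : ℕ) : ℝ) + (r:ℝ) * B := hc1
      _ ≤ (2:ℝ)^m / r + ((2:ℝ)^m / r) * ((2*(k:ℝ)^2) / Real.sqrt ((m:ℕ)+1:ℕ)) := by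
          exact add_le_add hc2 piece2
      _ = (2:ℝ)^(m+1) / (2*(r:ℝ)) * (1 + (2*(k:ℝ)^2) / Real.sqrt ((m:ℕ)+1:ℕ)) := by
          rw [hEq]; ring
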